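/- Fix a point x̄ ∈ dom φ that is not M-stationary, suppose φ is bounded below by an affine function, and let τ > 1, γ⁰ > 0, δ ∈ (0,1). For each i ∈ ℕ let x^i be a global minimizer of the proximal subproblem at x̄ with parameter γ_i := τ^i γ⁰. Then there exists an index i ∈ ℕ such that the acceptance criterion ψ(x^i) ≤ ψ(x̄) − δ(γ_i/2)‖x^i − x̄‖² holds. (Lemma 3.2: finiteness of the inner loop of the monotone proximal gradient method.) -/

import Mathlib

open Filter Topology RealInnerProductSpace

noncomputable section

variable {E : Type*} [NormedAddCommGroup E] [InnerProductSpace ℝ E] [FiniteDimensional ℝ E]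

/-- The objective `ψ = f + φ`, with values in `EReal`. -/
def psi (f : E → ℝ) (φ : E → EReal) (x : E) : EReal :=
  (f x : EReal) + φ x

/-- `φ` is bounded from below by an affine function. -/
def AffineBoundedBelow (φ : E → EReal) : Prop :=
  ∃ (a : E) (b : ℝ), ∀ x : E, ((⟪a, x⟫ + b : ℝ) : EReal) ≤ φ x

/-- Objective of the proximal subproblem at `xb` with parameter `γ`. -/
def proxObj (f : E → ℝ) (φ : E → EReal) (xb : E) (γ : ℝ) (x : E) : EReal :=
  ((f xb + ⟪gradient f xb, x - xb⟫ + γ / 2 * ‖x - xb‖ ^ 2 : ℝ) : EReal) + φ x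

/-- `x` is a global minimizer of the proximal subproblem at `xb` with parameter `γ`. -/
def IsProxMin (f : E → ℝ) (φ : E → EReal) (xb : E) (γ : ℝ) (x : E) : Prop :=
  ∀ y : E, proxObj f φ xb γ x ≤ proxObj f φ xb γ y

/-- Fréchet (regular) subdifferential of `φ` at `x`. -/
def FrechetSubdiff (φ : E → EReal) (x : E) : Set E :=
  {η : E | ∀ ε : ℝ, 0 < ε →
    ∀ᶠ y in 𝓝[≠] x, φ x + ((⟪η, y - x⟫ - ε * ‖y - x‖ : ℝ) : EReal) ≤ φ y}

/-- Limiting (Mordukhovich) subdifferential of `φ` at `x`. -/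
def LimitingSubdiff (φ : E → EReal) (x : E) : Set E :=
  {η : E | ∃ u v : ℕ → E,
    Tendsto u atTop (𝓝 x) ∧
    Tendsto (fun j => φ (u j)) atTop (𝓝 (φ x)) ∧
    Tendsto v atTop (𝓝 η) ∧
    ∀ j : ℕ, v j ∈ FrechetSubdiff φ (u j)}

/-- `x` is an M-stationary point of `min f + φ`. -/
def MStationary (f : E → ℝ) (φ : E → EReal) (x : E) : Prop :=
  φ x ≠ ⊤ ∧ -gradient f x ∈ LimitingSubdiff φ x

/-- `ψ` is bounded from below on `dom φ`. -/
def PsiBddBelow (f : E → ℝ) (φ : E → EReal) : Prop :=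
  ∃ c : ℝ, ∀ z : E, φ z ≠ ⊤ → (c : EReal) ≤ psi f φ z

/-- The monotone proximal gradient method (Algorithm 3.1). -/
structure MonoPG (f : E → ℝ) (φ : E → EReal) (τ γmin γmax δ : ℝ)
    (x : ℕ → E) (γ : ℕ → ℝ) : Prop where
  dom : ∀ k : ℕ, φ (x k) ≠ ⊤
  stepsize : ∀ k : ℕ, ∃ γ0 : ℝ, ∃ i : ℕ, γ0 ∈ Set.Icc γmin γmax ∧ γ k = τ ^ i * γ0 ∧
    (1 ≤ i → ∃ xh : E, IsProxMin f φ (x k) (γ k / τ) xh ∧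
      psi f φ (x k) < psi f φ xh + ((δ * (γ k / τ) / 2 * ‖xh - x k‖ ^ 2 : ℝ) : EReal))
  isMin : ∀ k : ℕ, IsProxMin f φ (x k) (γ k) (x (k + 1))
  accept : ∀ k : ℕ,
    psi f φ (x (k + 1)) + ((δ * γ k / 2 * ‖x (k + 1) - x k‖ ^ 2 : ℝ) : EReal) ≤ psi f φ (x k)

/-- The nonmonotone reference value `max_{j=0,…,min{k,m}} ψ(x^{k-j})`. -/
def nmax (f : E → ℝ) (φ : E → EReal) (x : ℕ → E) (m k : ℕ) : EReal :=
  (Finset.range (min k m + 1)).sup fun j => psi f φ (x (k - j))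

/-- The nonmonotone proximal gradient method (Algorithm 4.1). -/
structure NonmonoPG (f : E → ℝ) (φ : E → EReal) (τ γmin γmax δ : ℝ) (m : ℕ)
    (x : ℕ → E) (γ : ℕ → ℝ) : Prop where
  dom : ∀ k : ℕ, φ (x k) ≠ ⊤
  stepsize : ∀ k : ℕ, ∃ γ0 : ℝ, ∃ i : ℕ, γ0 ∈ Set.Icc γmin γmax ∧ γ k = τ ^ i * γ0 ∧
    (1 ≤ i → ∃ xh : E, IsProxMin f φ (x k) (γ k / τ) xh ∧
      nmax f φ x m k < psi f φ xh + ((δ * (γ k / τ) / 2 * ‖xh - x k‖ ^ 2 : ℝ) : EReal))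
  isMin : ∀ k : ℕ, IsProxMin f φ (x k) (γ k) (x (k + 1))
  accept : ∀ k : ℕ,
    psi f φ (x (k + 1)) + ((δ * γ k / 2 * ‖x (k + 1) - x k‖ ^ 2 : ℝ) : EReal) ≤ nmax f φ x m k

/-- `l` realizes the nonmonotone maximum `ψ(x^{l(k)}) = max_{j=0,…,m_k} ψ(x^{k-j})`,
with `l k ∈ {k - m_k, …, k}`. -/
def RealizesNMax (f : E → ℝ) (φ : E → EReal) (x : ℕ → E) (m : ℕ) (l : ℕ → ℕ) : Prop :=
  ∀ k : ℕ, k - min k m ≤ l k ∧ l k ≤ k ∧ psi f φ (x (l k)) = nmax f φ x m k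

/-- `ψ` is uniformly continuous on the sublevel set `L_ψ(x⁰)`. -/
def UnifContOnLevelSet (f : E → ℝ) (φ : E → EReal) (x0 : E) : Prop :=
  ∀ ε : ℝ, 0 < ε → ∃ η : ℝ, 0 < η ∧ ∀ u v : E,
    psi f φ u ≤ psi f φ x0 → psi f φ v ≤ psi f φ x0 → ‖u - v‖ ≤ η →
    psi f φ u ≤ psi f φ v + (ε : EReal)

/-- `φ` is continuous on its domain `dom φ`. -/
def ContOnDom (φ : E → EReal) : Prop :=
  ∀ x : E, φ x ≠ ⊤ → ∀ y : ℕ → E, (∀ j : ℕ, φ (y j) ≠ ⊤) →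
    Tendsto y atTop (𝓝 x) → Tendsto (fun j => φ (y j)) atTop (𝓝 (φ x))

/-- Lemma 3.2: finiteness of the inner loop of the monotone proximal gradient method.
If `xb ∈ dom φ` is not M-stationary, `φ` is bounded below by an affine function,
`τ > 1`, `γ⁰ > 0`, `δ ∈ (0,1)`, and for each `i` the point `x i` is a global minimizer of
the proximal subproblem at `xb` with parameter `γ_i = τ^i γ⁰`, then some `i` satisfies the
acceptance criterion `ψ(x i) ≤ ψ(xb) - δ (γ_i/2) ‖x i - xb‖²`. -/

lemma ereal_sub_le (r s : ℝ) (B : EReal) (hB : B ≠ ⊥) (h : (r : EReal) ≤ (s : EReal) + B) :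
    ((r - s : ℝ) : EReal) ≤ B := by
  induction B using EReal.rec with
  | bot => exact absurd rfl hB
  | coe b =>
    rw [← EReal.coe_add, EReal.coe_le_coe_iff] at h
    exact EReal.coe_le_coe_iff.2 (by linarith)
  | top => exact le_top

lemma ereal_ne_top_of_add_le (r s : ℝ) (A : EReal) (h : (r : EReal) + A ≤ (s : EReal)) :
    A ≠ ⊤ := by
  intro hA
  rw [hA, EReal.add_top_of_ne_bot (by simp)] at h
  exact absurd h (by simp)

theorem stmt_0
    (f : E → ℝ) (φ : E → EReal) (hf : ContDiff ℝ 1 f)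
    (hbot : ∀ z : E, φ z ≠ ⊥) (hproper : ∃ z : E, φ z ≠ ⊤)
    (hlsc : LowerSemicontinuous φ) (haff : AffineBoundedBelow φ)
    (xb : E) (hdom : φ xb ≠ ⊤) (hstat : ¬ MStationary f φ xb)
    (τ γ0 δ : ℝ) (hτ : 1 < τ) (hγ0 : 0 < γ0) (hδ : δ ∈ Set.Ioo (0 : ℝ) 1)
    (x : ℕ → E) (hx : ∀ i : ℕ, IsProxMin f φ xb (τ ^ i * γ0) (x i)) :
    ∃ i : ℕ,
      psi f φ (x i) + ((δ * (τ ^ i * γ0) / 2 * ‖x i - xb‖ ^ 2 : ℝ) : EReal) ≤ psi f φ xb := by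
  
  by_contra hcon
  push_neg at hcon
  have h1δ : (0:ℝ) < 1 - δ := by linarith [hδ.2]
  have hδ0 := hδ.1
  have hτ0 : (0:ℝ) < τ := lt_trans one_pos hτ
  have hγpos : ∀ i : ℕ, 0 < τ ^ i * γ0 := fun i => mul_pos (pow_pos hτ0 i) hγ0
  have hγtop : Tendsto (fun i : ℕ => τ ^ i * γ0) atTop atTop :=
    (tendsto_pow_atTop_atTop_of_one_lt hτ).atTop_mul_const hγ0
  obtain ⟨cb, hcb⟩ : ∃ cb : ℝ, φ xb = (cb : EReal) :=
    ⟨_, (EReal.coe_toReal hdom (hbot xb)).symm⟩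
  -- basic inequality from prox minimality, tested at y = xb
  have hmin : ∀ i : ℕ, ((f xb + ⟪gradient f xb, x i - xb⟫
      + (τ ^ i * γ0) / 2 * ‖x i - xb‖ ^ 2 : ℝ) : EReal) + φ (x i)
      ≤ ((f xb + cb : ℝ) : EReal) := by
    intro i
    have h := hx i xb
    simp only [proxObj, sub_self, inner_zero_right, norm_zero] at h
    rw [hcb] at h
    simpa [← EReal.coe_add] using h
  -- φ (x i) is finite
  have hφx : ∀ i : ℕ, ∃ c : ℝ, φ (x i) = (c : EReal) := by
    intro i
    have h := hmin i
    have hne := ereal_ne_top_of_add_le _ _ _ h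
    exact ⟨_, (EReal.coe_toReal hne (hbot _)).symm⟩
  choose c hc using hφx
  -- key real inequality
  have hkey : ∀ i : ℕ, f xb + ⟪gradient f xb, x i - xb⟫
      + (τ ^ i * γ0) / 2 * ‖x i - xb‖ ^ 2 + c i ≤ f xb + cb := by
    intro i
    have h := hmin i
    rw [hc i, ← EReal.coe_add, EReal.coe_le_coe_iff] at h
    exact h
  obtain ⟨a, b, hab⟩ := haff
  have haffr : ∀ i : ℕ, ⟪a, x i⟫ + b ≤ c i := by
    intro i
    have h := hab (x i)
    rw [hc i, EReal.coe_le_coe_iff] at h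
    exact h
  -- quadratic growth bound
  have hbound : ∀ i : ℕ, (τ ^ i * γ0) / 2 * ‖x i - xb‖ ^ 2
      ≤ (cb - b - ⟪a, xb⟫) + ‖a + gradient f xb‖ * ‖x i - xb‖ := by
    intro i
    have h1 := hkey i
    have h2 := haffr i
    have h3 : ⟪a, x i⟫ = ⟪a, xb⟫ + ⟪a, x i - xb⟫ := by
      rw [← inner_add_right]
      congr 1
      abel
    have h4 : -(‖a + gradient f xb‖ * ‖x i - xb‖) ≤ ⟪a + gradient f xb, x i - xb⟫ := by
      have := abs_real_inner_le_norm (a + gradient f xb) (x i - xb)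
      have h5 := neg_abs_le (⟪a + gradient f xb, x i - xb⟫ : ℝ)
      linarith
    have h5 : ⟪a + gradient f xb, x i - xb⟫ = ⟪a, x i - xb⟫ + ⟪gradient f xb, x i - xb⟫ :=
      inner_add_left _ _ _
    linarith
  -- ‖x i - xb‖ → 0
  have ht0 : Tendsto (fun i : ℕ => ‖x i - xb‖) atTop (𝓝 0) := by
    have hsq : Tendsto (fun i : ℕ => ‖x i - xb‖ ^ 2) atTop (𝓝 0) := by
      have hL : (0:ℝ) ≤ ‖a + gradient f xb‖ := norm_nonneg _
      apply squeeze_zero' (t₀ := atTop)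
        (g := fun i : ℕ => (2 * (cb - b - ⟪a, xb⟫) + ‖a + gradient f xb‖)
          / (τ ^ i * γ0 - ‖a + gradient f xb‖))
        (Eventually.of_forall fun i => sq_nonneg _)
      · have hev : ∀ᶠ i : ℕ in atTop, ‖a + gradient f xb‖ + 1 ≤ τ ^ i * γ0 :=
          hγtop.eventually_ge_atTop _
        filter_upwards [hev] with i hi
        have h1 := hbound i
        have h2 : ‖x i - xb‖ ≤ (1 + ‖x i - xb‖ ^ 2) / 2 := by
          nlinarith [sq_nonneg (‖x i - xb‖ - 1)]
        rw [le_div_iff₀ (by linarith)]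
        nlinarith [mul_le_mul_of_nonneg_left h2 hL, norm_nonneg (x i - xb)]
      · have := (tendsto_atTop_add_const_right atTop (-‖a + gradient f xb‖)
          hγtop).const_div_atTop (2 * (cb - b - ⟪a, xb⟫) + ‖a + gradient f xb‖)
        simpa [sub_eq_add_neg] using this
    have hcont := (Real.continuous_sqrt.tendsto 0).comp hsq
    simp only [Real.sqrt_zero, Function.comp_def] at hcont
    exact hcont.congr fun i => Real.sqrt_sq (norm_nonneg _)
  have hd0 : Tendsto x atTop (𝓝 xb) := tendsto_iff_norm_sub_tendsto_zero.2 ht0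
  -- x i ≠ xb
  have htpos : ∀ i : ℕ, 0 < ‖x i - xb‖ := by
    intro i
    rcases eq_or_ne (x i) xb with h | h
    · exfalso
      have hco := hcon i
      rw [h] at hco
      simp at hco
    · simpa [norm_pos_iff, sub_ne_zero] using h
  -- strict inequality from failure of the acceptance criterion
  have hstrict : ∀ i : ℕ, (1 - δ) * ((τ ^ i * γ0) / 2) * ‖x i - xb‖ ^ 2
      < f (x i) - f xb - ⟪gradient f xb, x i - xb⟫ := by
    intro i
    have h := hcon i
    simp only [psi] at h
    rw [hcb, hc i, ← EReal.coe_add, ← EReal.coe_add, ← EReal.coe_add,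
      EReal.coe_lt_coe_iff] at h
    have h2 := hkey i
    nlinarith [h, h2]
  -- little-o from differentiability
  have hgrad : HasGradientAt f (gradient f xb) xb :=
    ((hf.differentiable one_ne_zero) xb).hasGradientAt
  have ho : (fun i : ℕ => f (x i) - f xb - ⟪gradient f xb, x i - xb⟫)
      =o[atTop] fun i : ℕ => x i - xb :=
    (hasGradientAt_iff_isLittleO.1 hgrad).comp_tendsto hd0
  -- γ_i ‖x i - xb‖ → 0
  have hγt : Tendsto (fun i : ℕ => (τ ^ i * γ0) * ‖x i - xb‖) atTop (𝓝 0) := by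
    rw [tendsto_order]
    constructor
    · intro q hq
      exact Eventually.of_forall fun i =>
        lt_of_lt_of_le hq (mul_nonneg (hγpos i).le (norm_nonneg _))
    · intro q hq
      have hc4 : (0:ℝ) < (1 - δ) * q / 4 := by positivity
      filter_upwards [ho.def hc4] with i hi
      have h1 := hstrict i
      have h2 := htpos i
      have h3 : f (x i) - f xb - ⟪gradient f xb, x i - xb⟫
          ≤ (1 - δ) * q / 4 * ‖x i - xb‖ := by
        have := le_abs_self (f (x i) - f xb - ⟪gradient f xb, x i - xb⟫)
        have h' : |f (x i) - f xb - ⟪gradient f xb, x i - xb⟫|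
            ≤ (1 - δ) * q / 4 * ‖x i - xb‖ := by simpa [Real.norm_eq_abs] using hi
        linarith
      nlinarith [h1, h2, h3, mul_pos h2 h1δ, mul_pos (mul_pos h1δ hq) h2]
  -- the Fréchet subgradients converge to -∇f(xb)
  have hsm : Tendsto (fun i : ℕ => (τ ^ i * γ0) • (x i - xb)) atTop (𝓝 0) := by
    rw [tendsto_zero_iff_norm_tendsto_zero]
    refine hγt.congr fun i => ?_
    rw [norm_smul, Real.norm_eq_abs, abs_of_pos (hγpos i)]
  have hηt : Tendsto (fun i : ℕ => -gradient f xb - (τ ^ i * γ0) • (x i - xb)) atTop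
      (𝓝 (-gradient f xb)) := by
    simpa using tendsto_const_nhds.sub hsm
  -- φ (x i) → φ xb
  have hct : Tendsto c atTop (𝓝 cb) := by
    rw [tendsto_order]
    constructor
    · intro q hq
      have hq' : (q : EReal) < φ xb := by
        rw [hcb]; exact_mod_cast hq
      have hev := hd0.eventually (hlsc xb (q : EReal) hq')
      filter_upwards [hev] with i hi
      rw [hc i] at hi
      exact_mod_cast hi
    · intro q hq
      have hub : ∀ i : ℕ, c i ≤ cb + ‖gradient f xb‖ * ‖x i - xb‖ := by
        intro i
        have h1 := hkey i
        have h4 : -(‖gradient f xb‖ * ‖x i - xb‖) ≤ ⟪gradient f xb, x i - xb⟫ := by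
          have := abs_real_inner_le_norm (gradient f xb) (x i - xb)
          have h5 := neg_abs_le (⟪gradient f xb, x i - xb⟫ : ℝ)
          linarith
        nlinarith [mul_nonneg (hγpos i).le (sq_nonneg ‖x i - xb‖)]
      have hlim : Tendsto (fun i : ℕ => cb + ‖gradient f xb‖ * ‖x i - xb‖) atTop (𝓝 cb) := by
        have h : Tendsto (fun i : ℕ => cb + ‖gradient f xb‖ * ‖x i - xb‖) atTop
            (𝓝 (cb + ‖gradient f xb‖ * 0)) :=
          tendsto_const_nhds.add (ht0.const_mul ‖gradient f xb‖)
        simpa using h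
      filter_upwards [hlim.eventually_lt_const hq] with i hi
      exact lt_of_le_of_lt (hub i) hi
  have hφt : Tendsto (fun i : ℕ => φ (x i)) atTop (𝓝 (φ xb)) := by
    rw [hcb]
    exact (EReal.tendsto_coe.2 hct).congr fun i => (hc i).symm
  -- each iterate gives a Fréchet subgradient
  have hFre : ∀ i : ℕ,
      -gradient f xb - (τ ^ i * γ0) • (x i - xb) ∈ FrechetSubdiff φ (x i) := by
    intro i ε hε
    have hball : ∀ᶠ y in 𝓝 (x i), ‖y - x i‖ < 2 * ε / (τ ^ i * γ0) := by
      have hmem : Metric.ball (x i) (2 * ε / (τ ^ i * γ0)) ∈ 𝓝 (x i) :=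
        Metric.ball_mem_nhds _ (by positivity)
      filter_upwards [hmem] with y hy
      simpa [dist_eq_norm] using hy
    refine Eventually.filter_mono nhdsWithin_le_nhds ?_
    filter_upwards [hball] with y hy
    have hpm := hx i y
    simp only [proxObj] at hpm
    rw [hc i, ← EReal.coe_add] at hpm
    have hsub := ereal_sub_le _ _ _ (hbot y) hpm
    rw [hc i, ← EReal.coe_add]
    refine le_trans (EReal.coe_le_coe_iff.2 ?_) hsub
    have hyxb : y - xb = (x i - xb) + (y - x i) := by abel
    have hnsq : ‖y - xb‖ ^ 2 = ‖x i - xb‖ ^ 2 + 2 * ⟪x i - xb, y - x i⟫ + ‖y - x i‖ ^ 2 := by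
      rw [hyxb]; exact norm_add_sq_real _ _
    have hi1 : ⟪gradient f xb, y - xb⟫
        = ⟪gradient f xb, x i - xb⟫ + ⟪gradient f xb, y - x i⟫ := by
      rw [hyxb, inner_add_right]
    have hi2 : ⟪-gradient f xb - (τ ^ i * γ0) • (x i - xb), y - x i⟫
        = -⟪gradient f xb, y - x i⟫ - (τ ^ i * γ0) * ⟪x i - xb, y - x i⟫ := by
      rw [inner_sub_left, inner_neg_left, real_inner_smul_left]
    have h6 : (τ ^ i * γ0) * ‖y - x i‖ < 2 * ε := by
      have := (lt_div_iff₀ (hγpos i)).1 hy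
      linarith
    have h7 : (τ ^ i * γ0) * ‖y - x i‖ ^ 2 ≤ 2 * ε * ‖y - x i‖ := by
      nlinarith [norm_nonneg (y - x i), h6]
    rw [hi2, hnsq, hi1]
    nlinarith [h7]
  exact hstat ⟨hdom, x, fun i => -gradient f xb - (τ ^ i * γ0) • (x i - xb),
    hd0, hφt, hηt, hFre⟩
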